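/- In the welded braid group WB_{m+2}, for any b_1, b_2 in the image of the natural inclusion WB_m → WB_{m+2}, the following identity holds: b_1 σ_m^{-1} τ_m τ_{m+1} τ_m b_2 σ_m = τ_{m+1} b_1 τ_m b_2 σ_{m+1}^{-1} τ_{m+1} σ_m. (This is the key computation showing a right virtual exchange move is a consequence of welded Markov moves.) -/

import Mathlib

/-- Generators of the virtual/welded braid groups: `Sum.inl i` is σ_i, `Sum.inr i` is τ_i
(indices are 1-based; generators with index out of the range 1,…,m-1 are killed). -/
abbrev VGen := ℕ ⊕ ℕ

def fσ (i : ℕ) : FreeGroup VGen := FreeGroup.of (Sum.inl i)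
def fτ (i : ℕ) : FreeGroup VGen := FreeGroup.of (Sum.inr i)

/-- `i` is a valid generator index for degree `m`, i.e. `1 ≤ i ≤ m-1`. -/
abbrev inR (m i : ℕ) : Prop := 1 ≤ i ∧ i + 1 ≤ m

/-- `|i - j| > 1`. -/
abbrev far (i j : ℕ) : Prop := i + 1 < j ∨ j + 1 < i

/-- Defining relations of the virtual braid group VB_m. -/
def vbRels (m : ℕ) : Set (FreeGroup VGen) :=
  { r | (∃ i j, inR m i ∧ inR m j ∧ far i j ∧ r = fσ i * fσ j * (fσ j * fσ i)⁻¹)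
      ∨ (∃ i, inR m i ∧ inR m (i+1) ∧
            r = fσ i * fσ (i+1) * fσ i * (fσ (i+1) * fσ i * fσ (i+1))⁻¹)
      ∨ (∃ i, inR m i ∧ r = fτ i * fτ i)
      ∨ (∃ i j, inR m i ∧ inR m j ∧ far i j ∧ r = fτ i * fτ j * (fτ j * fτ i)⁻¹)
      ∨ (∃ i, inR m i ∧ inR m (i+1) ∧
            r = fτ i * fτ (i+1) * fτ i * (fτ (i+1) * fτ i * fτ (i+1))⁻¹)
      ∨ (∃ i j, inR m i ∧ inR m j ∧ far i j ∧ r = fσ i * fτ j * (fτ j * fσ i)⁻¹)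
      ∨ (∃ i, inR m i ∧ inR m (i+1) ∧
            r = fσ i * fτ (i+1) * fτ i * (fτ (i+1) * fτ i * fσ (i+1))⁻¹)
      ∨ (∃ i, ¬ inR m i ∧ (r = fσ i ∨ r = fτ i)) }

/-- Defining relations of the welded braid group WB_m: the virtual relations together with
the welded relations τ_i σ_{i+1} σ_i = σ_{i+1} σ_i τ_{i+1}. -/
def wbRels (m : ℕ) : Set (FreeGroup VGen) :=
  vbRels m ∪ { r | ∃ i, inR m i ∧ inR m (i+1) ∧
            r = fτ i * fσ (i+1) * fσ i * (fσ (i+1) * fσ i * fτ (i+1))⁻¹ }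

/-- The virtual braid group of degree `m`. -/
abbrev VB (m : ℕ) := PresentedGroup (vbRels m)

/-- The welded braid group of degree `m`. -/
abbrev WB (m : ℕ) := PresentedGroup (wbRels m)

def vσ (m i : ℕ) : VB m := PresentedGroup.of (Sum.inl i)
def vτ (m i : ℕ) : VB m := PresentedGroup.of (Sum.inr i)
def wσ (m i : ℕ) : WB m := PresentedGroup.of (Sum.inl i)
def wτ (m i : ℕ) : WB m := PresentedGroup.of (Sum.inr i)

/-- The adjacent transposition (i, i+1) (1-based) in the symmetric group on m letters. -/
def adj (m i : ℕ) (h : inR m i) : Equiv.Perm (Fin m) :=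
  Equiv.swap ⟨i - 1, by obtain ⟨h1, h2⟩ := h; omega⟩ ⟨i, by obtain ⟨h1, h2⟩ := h; omega⟩

private lemma wb_rel {m : ℕ} {r : FreeGroup VGen} (h : r ∈ wbRels m) :
    PresentedGroup.mk (wbRels m) r = 1 := by
  exact (QuotientGroup.eq_one_iff _).mpr (Subgroup.subset_normalClosure h)

private lemma wσ_eq (m i : ℕ) : wσ m i = PresentedGroup.mk (wbRels m) (fσ i) := rfl
private lemma wτ_eq (m i : ℕ) : wτ m i = PresentedGroup.mk (wbRels m) (fτ i) := rfl

-- τ_i² = 1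
private lemma rel_tau2 {m i : ℕ} (h : inR m i) : wτ m i * wτ m i = 1 := by
  have := wb_rel (m := m) (r := fτ i * fτ i) (Or.inl (by
    exact Or.inr (Or.inr (Or.inl ⟨i, h, rfl⟩))))
  simpa [wτ_eq, map_mul] using this

-- τ braid
private lemma rel_tbraid {m i : ℕ} (h1 : inR m i) (h2 : inR m (i+1)) :
    wτ m i * wτ m (i+1) * wτ m i = wτ m (i+1) * wτ m i * wτ m (i+1) := by
  have := wb_rel (m := m)
    (r := fτ i * fτ (i+1) * fτ i * (fτ (i+1) * fτ i * fτ (i+1))⁻¹)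
    (Or.inl (Or.inr (Or.inr (Or.inr (Or.inr (Or.inl ⟨i, h1, h2, rfl⟩))))))
  simp only [wτ_eq, map_mul, map_inv] at this ⊢
  group at this ⊢
  exact eq_of_div_eq_one (by simpa [div_eq_mul_inv, mul_assoc] using this)

-- mixed: σ_i τ_{i+1} τ_i = τ_{i+1} τ_i σ_{i+1}
private lemma rel_mixed {m i : ℕ} (h1 : inR m i) (h2 : inR m (i+1)) :
    wσ m i * wτ m (i+1) * wτ m i = wτ m (i+1) * wτ m i * wσ m (i+1) := by
  have := wb_rel (m := m)
    (r := fσ i * fτ (i+1) * fτ i * (fτ (i+1) * fτ i * fσ (i+1))⁻¹)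
    (Or.inl (Or.inr (Or.inr (Or.inr (Or.inr (Or.inr (Or.inr (Or.inl ⟨i, h1, h2, rfl⟩))))))))
  simp only [wσ_eq, wτ_eq, map_mul, map_inv] at this
  exact eq_of_div_eq_one (by simpa [div_eq_mul_inv, mul_assoc, wσ_eq, wτ_eq] using this)

private lemma rel_ss {m i j : ℕ} (h1 : inR m i) (h2 : inR m j) (h3 : far i j) :
    Commute (wσ m i) (wσ m j) := by
  have := wb_rel (m := m) (r := fσ i * fσ j * (fσ j * fσ i)⁻¹)
    (Or.inl (Or.inl ⟨i, j, h1, h2, h3, rfl⟩))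
  simp only [wσ_eq, map_mul, map_inv] at this
  have := eq_of_div_eq_one (a := PresentedGroup.mk (wbRels m) (fσ i) *
      PresentedGroup.mk (wbRels m) (fσ j))
    (b := PresentedGroup.mk (wbRels m) (fσ j) * PresentedGroup.mk (wbRels m) (fσ i))
    (by simpa [div_eq_mul_inv, mul_assoc] using this)
  exact this

private lemma rel_tt {m i j : ℕ} (h1 : inR m i) (h2 : inR m j) (h3 : far i j) :
    Commute (wτ m i) (wτ m j) := by
  have := wb_rel (m := m) (r := fτ i * fτ j * (fτ j * fτ i)⁻¹)
    (Or.inl (Or.inr (Or.inr (Or.inr (Or.inl ⟨i, j, h1, h2, h3, rfl⟩)))))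
  simp only [wτ_eq, map_mul, map_inv] at this
  exact eq_of_div_eq_one (by simpa [div_eq_mul_inv, mul_assoc, wτ_eq] using this)

private lemma rel_st {m i j : ℕ} (h1 : inR m i) (h2 : inR m j) (h3 : far i j) :
    Commute (wσ m i) (wτ m j) := by
  have := wb_rel (m := m) (r := fσ i * fτ j * (fτ j * fσ i)⁻¹)
    (Or.inl (Or.inr (Or.inr (Or.inr (Or.inr (Or.inr (Or.inl ⟨i, j, h1, h2, h3, rfl⟩)))))))
  simp only [wσ_eq, wτ_eq, map_mul, map_inv] at this
  exact eq_of_div_eq_one (by simpa [div_eq_mul_inv, mul_assoc, wσ_eq, wτ_eq] using this)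

private lemma rel_kill_σ {m i : ℕ} (h : ¬ inR m i) : wσ m i = 1 :=
  wb_rel (m := m) (Or.inl (Or.inr (Or.inr (Or.inr (Or.inr (Or.inr (Or.inr
    (Or.inr ⟨i, h, Or.inl rfl⟩))))))))

private lemma rel_kill_τ {m i : ℕ} (h : ¬ inR m i) : wτ m i = 1 :=
  wb_rel (m := m) (Or.inl (Or.inr (Or.inr (Or.inr (Or.inr (Or.inr (Or.inr
    (Or.inr ⟨i, h, Or.inr rfl⟩))))))))

theorem stmt7 (m : ℕ) (hm : 1 ≤ m) (ι : WB m →* WB (m+2))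
    (hι : ∀ i, inR m i → ι (wσ m i) = wσ (m+2) i ∧ ι (wτ m i) = wτ (m+2) i)
    (b₁ b₂ : WB m) :
    ι b₁ * (wσ (m+2) m)⁻¹ * wτ (m+2) m * wτ (m+2) (m+1) * wτ (m+2) m * ι b₂ * wσ (m+2) m
      = wτ (m+2) (m+1) * ι b₁ * wτ (m+2) m * ι b₂ *
        (wσ (m+2) (m+1))⁻¹ * wτ (m+2) (m+1) * wσ (m+2) m := by
  have hmR : inR (m+2) m := ⟨hm, by omega⟩
  have hm1R : inR (m+2) (m+1) := ⟨by omega, by omega⟩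
  set σm := wσ (m+2) m
  set σm1 := wσ (m+2) (m+1)
  set τm := wτ (m+2) m
  set τm1 := wτ (m+2) (m+1)
  -- every ι x commutes with σ_{m+1} and τ_{m+1}
  have key : ∀ x : WB m, Commute (ι x) σm1 ∧ Commute (ι x) τm1 := by
    have : ∀ x : WB m, x ∈ ((Subgroup.centralizer {σm1, τm1}).comap ι) := by
      intro x
      refine PresentedGroup.generated_by _ _ (fun j => ?_) x
      have hgen : ι (PresentedGroup.of j) ∈ Subgroup.centralizer {σm1, τm1} := by
        rw [Subgroup.mem_centralizer_iff]
        rintro g (rfl | rfl)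
        · -- g = σm1
          cases j with
          | inl i =>
            by_cases h : inR m i
            · have hfar : far i (m+1) := Or.inl (by omega)
              rw [show (PresentedGroup.of (Sum.inl i) : WB m) = wσ m i from rfl, (hι i h).1]
              exact (rel_ss ⟨h.1, by omega⟩ hm1R hfar).symm.eq
            · rw [show (PresentedGroup.of (Sum.inl i) : WB m) = wσ m i from rfl,
                rel_kill_σ h, map_one, mul_one, one_mul]
          | inr i =>
            by_cases h : inR m i
            · have hfar : far (m+1) i := Or.inr (by omega)
              rw [show (PresentedGroup.of (Sum.inr i) : WB m) = wτ m i from rfl, (hι i h).2]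
              exact (rel_st hm1R ⟨h.1, by omega⟩ hfar).eq
            · rw [show (PresentedGroup.of (Sum.inr i) : WB m) = wτ m i from rfl,
                rel_kill_τ h, map_one, mul_one, one_mul]
        · -- g = τm1
          cases j with
          | inl i =>
            by_cases h : inR m i
            · have hfar : far i (m+1) := Or.inl (by omega)
              rw [show (PresentedGroup.of (Sum.inl i) : WB m) = wσ m i from rfl, (hι i h).1]
              exact (rel_st ⟨h.1, by omega⟩ hm1R hfar).symm.eq
            · rw [show (PresentedGroup.of (Sum.inl i) : WB m) = wσ m i from rfl,
                rel_kill_σ h, map_one, mul_one, one_mul]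
          | inr i =>
            by_cases h : inR m i
            · have hfar : far i (m+1) := Or.inl (by omega)
              rw [show (PresentedGroup.of (Sum.inr i) : WB m) = wτ m i from rfl, (hι i h).2]
              exact (rel_tt ⟨h.1, by omega⟩ hm1R hfar).symm.eq
            · rw [show (PresentedGroup.of (Sum.inr i) : WB m) = wτ m i from rfl,
                rel_kill_τ h, map_one, mul_one, one_mul]
      exact Subgroup.mem_comap.mpr hgen
    intro x
    have hx := Subgroup.mem_comap.mp (this x)
    rw [Subgroup.mem_centralizer_iff] at hx
    exact ⟨(hx σm1 (by simp)).symm, (hx τm1 (by simp)).symm⟩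
  have hc1 : Commute (ι b₁) τm1 := (key b₁).2
  have hc2s : Commute (ι b₂) σm1 := (key b₂).1
  have hc2t : Commute (ι b₂) τm1 := (key b₂).2
  -- the core identity: σ_m⁻¹ τ_m τ_{m+1} τ_m = τ_{m+1} τ_m σ_{m+1}⁻¹ τ_{m+1}
  have hmix : σm * τm1 * τm = τm1 * τm * σm1 := rel_mixed hmR hm1R
  have hbraid : τm * τm1 * τm = τm1 * τm * τm1 := rel_tbraid hmR hm1R
  have htm2 : τm * τm = 1 := rel_tau2 hmR
  have htm12 : τm1 * τm1 = 1 := rel_tau2 hm1R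
  have hτm : τm⁻¹ = τm := by rw [inv_eq_iff_mul_eq_one]; exact htm2
  have hτm1 : τm1⁻¹ = τm1 := by rw [inv_eq_iff_mul_eq_one]; exact htm12
  have hinv : σm1⁻¹ * (τm * τm1) = τm * τm1 * σm⁻¹ := by
    have h := congrArg (·⁻¹) hmix
    simp only [mul_inv_rev, hτm, hτm1] at h
    rw [← mul_assoc] at h
    rw [← h]
  have hσ1inv : σm1⁻¹ = τm * τm1 * σm⁻¹ * τm1 * τm := by
    rw [← hinv]
    have h : σm1⁻¹ * (τm * τm1) * τm1 * τm = σm1⁻¹ * (τm * (τm1 * τm1) * τm) := by group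
    rw [h, htm12, mul_one, htm2, mul_one]
  have core : σm⁻¹ * τm * τm1 * τm = τm1 * τm * σm1⁻¹ * τm1 := by
    rw [hσ1inv]
    symm
    calc τm1 * τm * (τm * τm1 * σm⁻¹ * τm1 * τm) * τm1
        = τm1 * (τm * τm) * τm1 * σm⁻¹ * (τm1 * τm * τm1) := by group
      _ = τm1 * τm1 * σm⁻¹ * (τm * τm1 * τm) := by rw [htm2, ← hbraid]; group
      _ = σm⁻¹ * (τm * τm1 * τm) := by rw [htm12]; group
      _ = σm⁻¹ * τm * τm1 * τm := by group
  calc ι b₁ * σm⁻¹ * τm * τm1 * τm * ι b₂ * σm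
      = ι b₁ * (σm⁻¹ * τm * τm1 * τm) * ι b₂ * σm := by group
    _ = ι b₁ * (τm1 * τm * σm1⁻¹ * τm1) * ι b₂ * σm := by rw [core]
    _ = ι b₁ * τm1 * τm * (σm1⁻¹ * (τm1 * ι b₂)) * σm := by group
    _ = ι b₁ * τm1 * τm * (ι b₂ * σm1⁻¹ * τm1) * σm := by
        have h2 : σm1⁻¹ * ι b₂ = ι b₂ * σm1⁻¹ := (hc2s.inv_right).symm.eq
        rw [hc2t.symm.eq,
          show σm1⁻¹ * (ι b₂ * τm1) = ι b₂ * σm1⁻¹ * τm1 from by rw [← mul_assoc, h2]]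
    _ = τm1 * ι b₁ * τm * ι b₂ * σm1⁻¹ * τm1 * σm := by
        rw [show ι b₁ * τm1 = τm1 * ι b₁ from hc1.eq]; group
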